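/- Let 𝓕 be a non-principal ultrafilter on ℕ, let t be a transcendental complex number, and let (a_n) be a sequence of algebraic numbers such that the element ∏_𝓕 a_n of the ultraproduct ∏_𝓕 ℚ̄ is algebraic over ℚ; then there is a polynomial with rational coefficients vanishing at a_n for almost all n. In particular, if no value is attained by almost all a_n and the a_n take infinitely many distinct values with each value attained only finitely often, then ∏_𝓕 a_n is transcendental over ℚ (under any field embedding of ℚ into the ultraproduct). -/

import Mathlib

open Filter Polynomial

lemma germ_eval₂_eq (U : Ultrafilter ℕ) (a : ℕ → AlgebraicClosure ℚ) (p : Polynomial ℚ) :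
    Polynomial.eval₂ ((Filter.Germ.coeRingHom (U : Filter ℕ)).comp (algebraMap ℚ (ℕ → AlgebraicClosure ℚ)))
        ((a : ℕ → AlgebraicClosure ℚ) : Filter.Germ (U : Filter ℕ) (AlgebraicClosure ℚ)) p
      = ((fun n => Polynomial.aeval (a n) p : ℕ → AlgebraicClosure ℚ) :
          Filter.Germ (U : Filter ℕ) (AlgebraicClosure ℚ)) := by
  refine (Polynomial.hom_eval₂ p (algebraMap ℚ (ℕ → AlgebraicClosure ℚ))
    (Filter.Germ.coeRingHom (U : Filter ℕ)) a).symm.trans ?_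
  have hfun : (Polynomial.eval₂ (algebraMap ℚ (ℕ → AlgebraicClosure ℚ)) a p)
      = fun n => Polynomial.aeval (a n) p := by
    funext n
    have := Polynomial.hom_eval₂ p (algebraMap ℚ (ℕ → AlgebraicClosure ℚ))
      (Pi.evalRingHom (fun _ : ℕ => AlgebraicClosure ℚ) n) a
    rw [RingHom.ext_rat ((Pi.evalRingHom (fun _ : ℕ => AlgebraicClosure ℚ) n).comp (algebraMap ℚ (ℕ → AlgebraicClosure ℚ))) (algebraMap ℚ (AlgebraicClosure ℚ))] at this
    simpa [Polynomial.aeval_def] using this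
  exact congrArg (Filter.Germ.coeRingHom (U : Filter ℕ)) hfun

lemma key (U : Ultrafilter ℕ) (a : ℕ → AlgebraicClosure ℚ) (p : Polynomial ℚ)
    (h : Polynomial.eval₂ ((Filter.Germ.coeRingHom (U : Filter ℕ)).comp (algebraMap ℚ (ℕ → AlgebraicClosure ℚ)))
        ((a : ℕ → AlgebraicClosure ℚ) : Filter.Germ (U : Filter ℕ) (AlgebraicClosure ℚ)) p = 0) :
    ∀ᶠ n in (U : Filter ℕ), Polynomial.aeval (a n) p = 0 := by
  rw [germ_eval₂_eq] at h
  exact Filter.Germ.coe_eq.mp h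

/-- If an element of the ultraproduct ∏_𝓕 ℚ̄ (germ of a sequence of algebraic numbers) is
algebraic over ℚ, then some nonzero rational polynomial vanishes at a_n for almost all n.
In particular, if each value is attained only finitely often and infinitely many distinct values
occur, then the germ is transcendental over ℚ. -/
theorem germ_algebraic_iff_eventually (U : Ultrafilter ℕ) (hU : ∀ a : ℕ, U ≠ (pure a : Ultrafilter ℕ))
    (t : ℂ) (ht : Transcendental ℚ t)
    (a : ℕ → AlgebraicClosure ℚ) :
    ((∃ p : Polynomial ℚ, p ≠ 0 ∧
        Polynomial.eval₂ ((Filter.Germ.coeRingHom (U : Filter ℕ)).comp (algebraMap ℚ (ℕ → AlgebraicClosure ℚ)))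
          ((a : ℕ → AlgebraicClosure ℚ) : Filter.Germ (U : Filter ℕ) (AlgebraicClosure ℚ)) p = 0) →
      ∃ p : Polynomial ℚ, p ≠ 0 ∧ ∀ᶠ n in (U : Filter ℕ), Polynomial.aeval (a n) p = 0) ∧
    ((∀ v : AlgebraicClosure ℚ, {n | a n = v}.Finite) → (Set.range a).Infinite →
      ∀ p : Polynomial ℚ,
        Polynomial.eval₂ ((Filter.Germ.coeRingHom (U : Filter ℕ)).comp (algebraMap ℚ (ℕ → AlgebraicClosure ℚ)))
          ((a : ℕ → AlgebraicClosure ℚ) : Filter.Germ (U : Filter ℕ) (AlgebraicClosure ℚ)) p = 0 →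
        p = 0) := by
  classical
  constructor
  · rintro ⟨p, hp, h⟩
    exact ⟨p, hp, key U a p h⟩
  · intro hfin _ p h
    by_contra hp
    have hev : ∀ᶠ n in (U : Filter ℕ), Polynomial.aeval (a n) p = 0 := key U a p h
    have hle : (U : Filter ℕ) ≤ cofinite := by
      rcases U.le_cofinite_or_eq_pure with h' | ⟨n, hn⟩
      · exact h'
      · exact absurd hn (hU n)
    -- the set where aeval vanishes is finite
    have hq : (Polynomial.map (algebraMap ℚ (AlgebraicClosure ℚ)) p) ≠ 0 := by
      simpa [Polynomial.map_ne_zero_iff (algebraMap ℚ (AlgebraicClosure ℚ)).injective] using hp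
    have hS : {n | Polynomial.aeval (a n) p = 0}.Finite := by
      have hsub : {n | Polynomial.aeval (a n) p = 0} ⊆
          ⋃ v ∈ (Polynomial.map (algebraMap ℚ (AlgebraicClosure ℚ)) p).roots.toFinset,
            {n | a n = v} := by
        intro n hn
        simp only [Set.mem_iUnion, Multiset.mem_toFinset]
        refine ⟨a n, ?_, rfl⟩
        rw [Polynomial.mem_roots hq, Polynomial.IsRoot, Polynomial.eval_map, ← Polynomial.aeval_def]
        exact hn
      exact Set.Finite.subset (Set.Finite.biUnion (Finset.finite_toSet _) fun v _ => hfin v) hsub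
    have : {n | Polynomial.aeval (a n) p = 0}ᶜ ∈ (U : Filter ℕ) := hle hS.compl_mem_cofinite
    have h2 := Filter.inter_mem hev this
    simp at h2
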